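/- Let n ≥ 1 and let a, b ∈ ℝⁿ with aᵢ < bᵢ for each i; let Ω be the open box {x ∈ ℝⁿ : aᵢ < xᵢ < bᵢ for all i} with closure K. Let f : ℝⁿ×ℝ×ℝⁿ → ℝ be continuous, h : ℝⁿ → ℝ continuous on K, and φ : ℝⁿ×ℝ → ℝⁿ continuously differentiable with φ(x,0) = 0 for every x ∈ K. Suppose that for every x ∈ K, y ∈ ℝ, z ∈ ℝⁿ: f(x,y,z) + Σᵢ (∂φᵢ/∂xᵢ(x,y) + ∂φᵢ/∂y(x,y)·zᵢ) ≥ h(x). Then every continuously differentiable u : ℝⁿ → ℝ that vanishes on the boundary of K (i.e., u(x) = 0 whenever xᵢ ∈ {aᵢ, bᵢ} for some i) satisfies ∫_Ω f(x, u(x), ∇u(x)) dx ≥ ∫_Ω h(x) dx. -/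

import Mathlib

open MeasureTheory Set

theorem stmt_15
    (n : ℕ) (hn : 1 ≤ n)
    (a b : Fin n → ℝ) (hab : ∀ i, a i < b i)
    (f : (Fin n → ℝ) → ℝ → (Fin n → ℝ) → ℝ)
    (hf : Continuous fun p : (Fin n → ℝ) × ℝ × (Fin n → ℝ) => f p.1 p.2.1 p.2.2)
    (h : (Fin n → ℝ) → ℝ)
    (hh : ContinuousOn h (Set.Icc a b))
    (φ : (Fin n → ℝ) → ℝ → (Fin n → ℝ))
    (hφ : ContDiff ℝ 1 fun p : (Fin n → ℝ) × ℝ => φ p.1 p.2)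
    (hφ0 : ∀ x ∈ Set.Icc a b, φ x 0 = 0)
    (hpoint : ∀ x ∈ Set.Icc a b, ∀ (y : ℝ) (z : Fin n → ℝ),
      f x y z + ∑ i, (fderiv ℝ (fun x' => φ x' y i) x (Pi.single i 1)
        + deriv (fun t => φ x t i) y * z i) ≥ h x)
    (u : (Fin n → ℝ) → ℝ) (hu : ContDiff ℝ 1 u)
    (hubc : ∀ x ∈ Set.Icc a b, (∃ i, x i = a i ∨ x i = b i) → u x = 0) :
    (∫ x in Set.univ.pi (fun i => Set.Ioo (a i) (b i)),
        f x (u x) (fun i => fderiv ℝ u x (Pi.single i 1)))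
      ≥ ∫ x in Set.univ.pi (fun i => Set.Ioo (a i) (b i)), h x := by
  obtain ⟨m, rfl⟩ : ∃ m, n = m + 1 := ⟨n - 1, by omega⟩
  set Φ : ((Fin (m + 1) → ℝ) × ℝ) → (Fin (m + 1) → ℝ) := fun p => φ p.1 p.2 with hΦdef
  have hΦd : Differentiable ℝ Φ := hφ.differentiable one_ne_zero
  have hud : Differentiable ℝ u := hu.differentiable one_ne_zero
  -- the vector field and its derivative
  set F : (Fin (m + 1) → ℝ) → (Fin (m + 1) → ℝ) := fun x => φ x (u x) with hFdef
  set F' : (Fin (m + 1) → ℝ) → (Fin (m + 1) → ℝ) →L[ℝ] (Fin (m + 1) → ℝ) :=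
    fun x => (fderiv ℝ Φ (x, u x)).comp
      ((ContinuousLinearMap.id ℝ (Fin (m + 1) → ℝ)).prod (fderiv ℝ u x)) with hF'def
  have hFderiv : ∀ x, HasFDerivAt F (F' x) x := by
    intro x
    exact (hΦd (x, u x)).hasFDerivAt.comp x
      ((hasFDerivAt_id x).prodMk (hud x).hasFDerivAt)
  -- partial derivative identities
  have hA : ∀ (x : Fin (m + 1) → ℝ) (y : ℝ) (i : Fin (m + 1)),
      fderiv ℝ (fun x' => φ x' y i) x (Pi.single i 1)
        = fderiv ℝ Φ (x, y) (Pi.single i 1, 0) i := by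
    intro x y i
    have h1 : HasFDerivAt (fun x' : Fin (m + 1) → ℝ => φ x' y i)
        (((ContinuousLinearMap.proj i).comp (fderiv ℝ Φ (x, y))).comp
          (ContinuousLinearMap.inl ℝ (Fin (m + 1) → ℝ) ℝ)) x := by
      exact ((ContinuousLinearMap.proj i).hasFDerivAt.comp (x, y)
        (hΦd (x, y)).hasFDerivAt).comp x (hasFDerivAt_prodMk_left (𝕜 := ℝ) x y)
    rw [h1.fderiv]; rfl
  have hB : ∀ (x : Fin (m + 1) → ℝ) (y : ℝ) (i : Fin (m + 1)),
      deriv (fun t => φ x t i) y = fderiv ℝ Φ (x, y) (0, 1) i := by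
    intro x y i
    have h1 : HasFDerivAt (fun t : ℝ => φ x t i)
        (((ContinuousLinearMap.proj i).comp (fderiv ℝ Φ (x, y))).comp
          (ContinuousLinearMap.inr ℝ (Fin (m + 1) → ℝ) ℝ)) y := by
      exact ((ContinuousLinearMap.proj i).hasFDerivAt.comp (x, y)
        (hΦd (x, y)).hasFDerivAt).comp y (hasFDerivAt_prodMk_right x y)
    rw [h1.hasDerivAt.deriv]; rfl
  -- the divergence of F
  have hdiv : ∀ x : Fin (m + 1) → ℝ,
      (∑ i, F' x (Pi.single i 1) i)
        = ∑ i, (fderiv ℝ (fun x' => φ x' (u x) i) x (Pi.single i 1)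
            + deriv (fun t => φ x t i) (u x) * fderiv ℝ u x (Pi.single i 1)) := by
    intro x
    refine Finset.sum_congr rfl fun i _ => ?_
    rw [hA, hB]
    have this1 : (Pi.single i 1, fderiv ℝ u x (Pi.single i 1))
        = ((Pi.single i 1 : Fin (m + 1) → ℝ), (0 : ℝ))
          + (fderiv ℝ u x (Pi.single i 1)) • ((0 : Fin (m + 1) → ℝ), (1 : ℝ)) := by
      simp [Prod.ext_iff]
    have key : F' x (Pi.single i 1)
        = fderiv ℝ Φ (x, u x) (Pi.single i 1, 0)
          + (fderiv ℝ u x (Pi.single i 1)) • fderiv ℝ Φ (x, u x) (0, 1) := by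
      simp only [hF'def, ContinuousLinearMap.comp_apply, ContinuousLinearMap.prod_apply,
        ContinuousLinearMap.id_apply, this1, map_add,
        ContinuousLinearMap.map_smul]
    rw [key]
    simp [mul_comm]
  -- continuity facts
  have hgrad : Continuous fun x => (fun i => fderiv ℝ u x (Pi.single i 1)) :=
    continuous_pi fun i => (hu.continuous_fderiv one_ne_zero).clm_apply continuous_const
  have hfc : Continuous fun x => f x (u x) (fun i => fderiv ℝ u x (Pi.single i 1)) :=
    hf.comp (continuous_id.prodMk (hu.continuous.prodMk hgrad))
  have hdivc : Continuous fun x => ∑ i, F' x (Pi.single i 1) i := by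
    apply continuous_finset_sum
    intro i _
    have h1 : Continuous fun x : Fin (m + 1) → ℝ => fderiv ℝ Φ (x, u x) :=
      (hφ.continuous_fderiv one_ne_zero).comp (continuous_id.prodMk hu.continuous)
    have h2 : Continuous fun x : Fin (m + 1) → ℝ =>
        ((Pi.single i 1 : Fin (m + 1) → ℝ), fderiv ℝ u x (Pi.single i 1)) :=
      continuous_const.prodMk ((hu.continuous_fderiv one_ne_zero).clm_apply continuous_const)
    have h3 : Continuous fun x : Fin (m + 1) → ℝ =>
        fderiv ℝ Φ (x, u x) ((Pi.single i 1 : Fin (m + 1) → ℝ),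
          fderiv ℝ u x (Pi.single i 1)) := h1.clm_apply h2
    exact (continuous_apply i).comp h3
  -- basic set facts
  set Ω : Set (Fin (m + 1) → ℝ) := Set.univ.pi (fun i => Set.Ioo (a i) (b i)) with hΩdef
  have hΩmeas : MeasurableSet Ω := MeasurableSet.univ_pi fun i => measurableSet_Ioo
  have hΩsub : Ω ⊆ Set.Icc a b := by
    rw [← Set.pi_univ_Icc]
    exact Set.pi_mono fun i _ => Set.Ioo_subset_Icc_self
  have hΩae : Ω =ᵐ[volume] Set.Icc a b := by
    rw [hΩdef, volume_pi]
    exact MeasureTheory.Measure.univ_pi_Ioo_ae_eq_Icc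
  have hle : a ≤ b := fun i => (hab i).le
  -- integrability
  have hInt_div : IntegrableOn (fun x => ∑ i, F' x (Pi.single i 1) i) (Set.Icc a b) :=
    hdivc.continuousOn.integrableOn_compact isCompact_Icc
  have hInt_h : IntegrableOn h Ω :=
    (hh.integrableOn_compact isCompact_Icc).mono_set hΩsub
  have hInt_f : IntegrableOn
      (fun x => f x (u x) (fun i => fderiv ℝ u x (Pi.single i 1))) Ω :=
    (hfc.continuousOn.integrableOn_compact isCompact_Icc).mono_set hΩsub
  have hInt_divΩ : IntegrableOn (fun x => ∑ i, F' x (Pi.single i 1) i) Ω :=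
    hInt_div.mono_set hΩsub
  -- divergence theorem: the integral of the divergence is 0
  have hdivthm : (∫ x in Set.Icc a b, ∑ i, F' x (Pi.single i 1) i) = 0 := by
    rw [MeasureTheory.integral_divergence_of_hasFDerivAt_off_countable a b hle F F' ∅
      Set.countable_empty
      ((hφ.continuous.comp (continuous_id.prodMk hu.continuous)).continuousOn)
      (fun x _ => hFderiv x) hInt_div]
    refine Finset.sum_eq_zero fun i _ => ?_
    have z1 : ∀ (c : ℝ), c = a i ∨ c = b i →
        (∫ x in Set.Icc (a ∘ i.succAbove) (b ∘ i.succAbove),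
          F (i.insertNth c x) i) = 0 := by
      intro c hc
      rw [MeasureTheory.setIntegral_congr_fun measurableSet_Icc
        (g := fun _ => (0 : ℝ)) ?_, integral_zero]
      intro x hx
      have hmem : i.insertNth c x ∈ Set.Icc a b := by
        refine Fin.insertNth_mem_Icc.2 ⟨?_, hx⟩
        rcases hc with rfl | rfl
        · exact ⟨le_rfl, (hab i).le⟩
        · exact ⟨(hab i).le, le_rfl⟩
      have hu0 : u (i.insertNth c x) = 0 := by
        refine hubc _ hmem ⟨i, ?_⟩
        rcases hc with rfl | rfl
        · left; simp
        · right; simp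
      simp only [hFdef, hu0]
      rw [hφ0 _ hmem]
      rfl
    rw [z1 (b i) (Or.inr rfl), z1 (a i) (Or.inl rfl), sub_zero]
  have hdivΩ : (∫ x in Ω, ∑ i, F' x (Pi.single i 1) i) = 0 := by
    rw [MeasureTheory.setIntegral_congr_set hΩae]; exact hdivthm
  -- pointwise inequality
  have hptwise : ∀ x ∈ Ω,
      h x - (∑ i, F' x (Pi.single i 1) i)
        ≤ f x (u x) (fun i => fderiv ℝ u x (Pi.single i 1)) := by
    intro x hx
    have := hpoint x (hΩsub hx) (u x) (fun i => fderiv ℝ u x (Pi.single i 1))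
    rw [hdiv x]
    linarith [this]
  calc (∫ x in Ω, f x (u x) (fun i => fderiv ℝ u x (Pi.single i 1)))
      ≥ ∫ x in Ω, (h x - ∑ i, F' x (Pi.single i 1) i) := by
        exact MeasureTheory.setIntegral_mono_on (hInt_h.sub hInt_divΩ) hInt_f hΩmeas hptwise
    _ = (∫ x in Ω, h x) - ∫ x in Ω, ∑ i, F' x (Pi.single i 1) i :=
        MeasureTheory.integral_sub hInt_h hInt_divΩ
    _ = ∫ x in Ω, h x := by rw [hdivΩ, sub_zero]
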